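/- For real x ≠ 0 and all n ≥ 1, the n-th power of the matrix M(x) = [[1, −1/x²], [1, 0]] equals [[x·O_{n+1}(x), −(1/x)·O_n(x)], [x·O_n(x), −(1/x)·O_{n−1}(x)]]. -/

import Mathlib

noncomputable def oresme : ℕ → ℝ → ℝ
  | 0 => fun _ => 0
  | 1 => fun x => 1/x
  | (n+2) => fun x => oresme (n+1) x - (1/x^2) * oresme n x

theorem oresme_matrix_power (x : ℝ) (hx : x ≠ 0) (n : ℕ) (hn : 1 ≤ n) :
    (!![1, -(1/x^2); 1, 0] : Matrix (Fin 2) (Fin 2) ℝ) ^ n =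
      !![x * oresme (n+1) x, -(1/x) * oresme n x;
         x * oresme n x, -(1/x) * oresme (n-1) x] := by
  obtain ⟨m, rfl⟩ := Nat.exists_eq_add_of_le hn
  clear hn
  induction m with
  | zero =>
    simp [oresme, pow_one]
    refine ⟨⟨(mul_inv_cancel₀ hx).symm, by rw [pow_two, mul_inv]⟩, (mul_inv_cancel₀ hx).symm⟩
  | succ k ih =>
    have : 1 + (k + 1) = (1 + k) + 1 := by ring
    rw [this, pow_succ, ih]
    ext i j
    fin_cases i <;> fin_cases j <;>
      simp [Matrix.mul_apply, Fin.sum_univ_two, oresme, Nat.add_sub_cancel] <;>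
      · show _ = _
        simp [show 1 + k - 1 = k by omega, show 1 + k + 1 + 1 = k + 1 + 2 by omega,
          show 1 + k + 1 = k + 2 by omega, show 1 + k = k + 1 by omega, oresme]
        field_simp
        all_goals ring
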